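/- For a finitely generated group Γ, the following conditions are equivalent: (1) there exist a commutative unital ring R, a finitely generated projective R-module M and a group homomorphism Γ → Aut_R(M) (the group of R-linear automorphisms of M) whose image is not virtually solvable; (2) there exist a commutative unital ring R, an integer n ≥ 1 and a group homomorphism Γ → GL_n(R) whose image is not virtually solvable; (3) there exist a field K, an integer n ≥ 1 and a group homomorphism Γ → GL_n(K) whose image is not virtually solvable. -/

import Mathlib

/-- A group is virtually solvable if it contains a solvable subgroup of finite index. -/
def IsVirtuallySolvable (G : Type*) [Group G] : Prop :=
  ∃ H : Subgroup G, H.FiniteIndex ∧ IsSolvable H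

section GroupHelpers
variable {G H : Type*} [Group G] [Group H]

lemma derivedSeries_bot_of_le {n m : ℕ} (h : derivedSeries G n = ⊥) (hnm : n ≤ m) :
    derivedSeries G m = ⊥ := by
  obtain ⟨k, rfl⟩ := Nat.exists_eq_add_of_le hnm
  induction k with
  | zero => exact h
  | succ k ih =>
    rw [← Nat.add_assoc, derivedSeries_succ, ih (Nat.le_add_right n k),
      Subgroup.commutator_bot_left]

lemma isSolvable_pi {ι : Type*} [Finite ι] {H : ι → Type*} [∀ i, Group (H i)]
    [hs : ∀ i, Group.IsSolvable (H i)] : IsSolvable (∀ i, H i) := by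
  cases nonempty_fintype ι
  choose n hn using fun i => (hs i).solvable
  refine ⟨⟨Finset.univ.sup n, ?_⟩⟩
  rw [eq_bot_iff]
  intro x hx
  have : ∀ i, x i = 1 := by
    intro i
    have h1 : x i ∈ (derivedSeries (∀ j, H j) (Finset.univ.sup n)).map (Pi.evalMonoidHom H i) :=
      ⟨x, hx, rfl⟩
    have h2 := map_derivedSeries_le_derivedSeries (Pi.evalMonoidHom H i) (Finset.univ.sup n) h1
    rw [derivedSeries_bot_of_le (hn i) (Finset.le_sup (Finset.mem_univ i))] at h2
    exact h2
  exact Subgroup.mem_bot.mpr (funext this)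

lemma isSolvable_of_mulEquiv (e : G ≃* H) [Group.IsSolvable H] : IsSolvable G :=
  solvable_of_solvable_injective (f := e.toMonoidHom) e.injective

lemma vs_of_mulEquiv (e : G ≃* H) (h : IsVirtuallySolvable H) : IsVirtuallySolvable G := by
  obtain ⟨K, hfi, hsolv⟩ := h
  refine ⟨K.comap e.toMonoidHom, ?_, ?_⟩
  · constructor
    rw [Subgroup.index_comap_of_surjective K e.surjective]
    exact hfi.index_ne_zero
  · have : K.comap e.toMonoidHom = K.map e.symm.toMonoidHom := (Subgroup.comap_equiv_eq_map_symm e K)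
    rw [this]
    haveI : Group.IsSolvable K := hsolv
    exact isSolvable_of_mulEquiv (e.symm.subgroupMap K).symm

lemma vs_iff_of_mulEquiv (e : G ≃* H) : IsVirtuallySolvable G ↔ IsVirtuallySolvable H :=
  ⟨vs_of_mulEquiv e.symm, vs_of_mulEquiv e⟩

/-- range of comp with injective hom -/
lemma vs_range_comp_injective {Γ : Type*} [Group Γ] (f : Γ →* G) (j : G →* H)
    (hj : Function.Injective j) :
    IsVirtuallySolvable ↥(j.comp f).range ↔ IsVirtuallySolvable ↥f.range := by
  rw [MonoidHom.range_comp]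
  exact (vs_iff_of_mulEquiv (f.range.equivMapOfInjective j hj)).symm

/-- range of comp with surjective hom on the left -/
lemma range_comp_surjective {Γ Δ : Type*} [Group Γ] [Group Δ] (f : Δ →* G) (p : Γ →* Δ)
    (hp : Function.Surjective p) : (f.comp p).range = f.range := by
  rw [MonoidHom.range_comp, p.range_eq_top_of_surjective hp, ← MonoidHom.range_eq_map]

/-- inclusion of `K.subgroupOf L` into `K` -/
lemma isSolvable_subgroupOf {K L : Subgroup G} (hK : IsSolvable K) :
    IsSolvable (K.subgroupOf L) := by
  have : Group.IsSolvable ↥K := hK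
  exact solvable_of_solvable_injective
    (f := { toFun := fun x : (K.subgroupOf L) => (⟨x.1.1, x.2⟩ : K),
            map_one' := rfl, map_mul' := fun _ _ => rfl })
    (fun a b hab => by
      have h2 : ((⟨a.1.1, a.2⟩ : K) : G) = ((⟨b.1.1, b.2⟩ : K) : G) := congrArg Subtype.val hab
      exact Subtype.ext (Subtype.ext h2))

lemma vs_of_ker_solvable {Γ : Type*} [Group Γ] (g : Γ →* G) (hker : IsSolvable g.ker)
    (hrange : IsVirtuallySolvable ↥g.range) : IsVirtuallySolvable Γ := by
  obtain ⟨T, hfi, hsolv⟩ := hrange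
  refine ⟨T.comap g.rangeRestrict, ⟨by
    rw [Subgroup.index_comap_of_surjective T g.rangeRestrict_surjective]
    exact hfi.index_ne_zero⟩, ?_⟩
  set G₀ := T.comap g.rangeRestrict
  let φ : ↥G₀ →* ↥T :=
    { toFun := fun x => ⟨g.rangeRestrict x.1, x.2⟩,
      map_one' := by ext; simp,
      map_mul' := fun a b => by ext; simp }
  have hker' : Group.IsSolvable (g.ker.subgroupOf G₀) := isSolvable_subgroupOf hker
  haveI : Group.IsSolvable T := hsolv
  refine solvable_of_ker_le_range (g.ker.subgroupOf G₀).subtype φ ?_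
  intro x hx
  rw [Subgroup.range_subtype]
  have : g.rangeRestrict x.1 = 1 := congrArg Subtype.val (hx : φ x = 1)
  have hx1 : x.1 ∈ g.ker := by
    rw [MonoidHom.mem_ker, ← g.coe_rangeRestrict, this]; rfl
  exact hx1

lemma vs_of_pi {Γ ι : Type*} [Group Γ] [Finite ι] {H : ι → Type*} [∀ i, Group (H i)]
    (g : Γ →* ∀ i, H i) (hker : IsSolvable g.ker)
    (hcomp : ∀ i, IsVirtuallySolvable ↥((Pi.evalMonoidHom H i).comp g).range) :
    IsVirtuallySolvable Γ := by
  classical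
  choose T hTfi hTsolv using hcomp
  let gi : ∀ i, Γ →* H i := fun i => (Pi.evalMonoidHom H i).comp g
  let Gi : ι → Subgroup Γ := fun i => (T i).comap (gi i).rangeRestrict
  haveI : ∀ i, (Gi i).FiniteIndex := fun i => ⟨by
    rw [Subgroup.index_comap_of_surjective (T i) (gi i).rangeRestrict_surjective]
    exact (hTfi i).index_ne_zero⟩
  refine ⟨⨅ i, Gi i, Subgroup.finiteIndex_iInf this, ?_⟩
  set G₀ := ⨅ i, Gi i with hG₀
  have hmem : ∀ (x : ↥G₀) (i : ι), (gi i).rangeRestrict x.1 ∈ T i := fun x i =>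
    (Subgroup.mem_iInf.mp x.2) i
  let φ : ↥G₀ →* ∀ i, ↥(T i) :=
    { toFun := fun x => fun i => ⟨(gi i).rangeRestrict x.1, hmem x i⟩,
      map_one' := by funext i; ext; simp,
      map_mul' := fun a b => by funext i; ext; simp }
  haveI : ∀ i, Group.IsSolvable ↥(T i) := hTsolv
  haveI : Group.IsSolvable (∀ i, ↥(T i)) := isSolvable_pi
  have hker' : Group.IsSolvable (g.ker.subgroupOf G₀) := isSolvable_subgroupOf hker
  refine solvable_of_ker_le_range (g.ker.subgroupOf G₀).subtype φ ?_
  intro x hx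
  rw [Subgroup.range_subtype]
  have hx1 : φ x = 1 := hx
  have h1 : ∀ i, (gi i).rangeRestrict x.1 = 1 := by
    intro i
    have h0 : φ x i = 1 := congrFun hx1 i
    exact congrArg Subtype.val h0
  have h2 : ∀ i, gi i x.1 = 1 := fun i => by
    rw [← (gi i).coe_rangeRestrict, h1 i]; rfl
  have : g x.1 = 1 := funext fun i => h2 i
  exact MonoidHom.mem_ker.mpr this

end GroupHelpers

section Congruence
open Matrix
open scoped commutatorElement
variable {R : Type*} [CommRing R] {n : ℕ}

lemma mem_ker_glmap {S : Type*} [CommRing S] (f : R →+* S) (g : GL (Fin n) R) :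
    g ∈ (Matrix.GeneralLinearGroup.map (n := Fin n) f).ker ↔
      ∀ i j, ((g : Matrix (Fin n) (Fin n) R) - 1) i j ∈ RingHom.ker f := by
  rw [MonoidHom.mem_ker, Units.ext_iff, ← Matrix.ext_iff]
  refine forall₂_congr fun i j => ?_
  have h1 : ((Matrix.GeneralLinearGroup.map (n := Fin n) f g :
      Matrix (Fin n) (Fin n) S)) i j = f ((g : Matrix (Fin n) (Fin n) R) i j) := by
    simp
  rw [h1]
  have h2 : ((1 : GL (Fin n) S) : Matrix (Fin n) (Fin n) S) i j
      = f ((1 : Matrix (Fin n) (Fin n) R) i j) := by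
    simp [Matrix.one_apply, apply_ite f]
  rw [h2, Matrix.sub_apply, RingHom.mem_ker, map_sub, sub_eq_zero]

/-- The congruence subgroup: matrices congruent to 1 mod `I`. -/
def congSubgroup (n : ℕ) (I : Ideal R) : Subgroup (GL (Fin n) R) :=
  (Matrix.GeneralLinearGroup.map (n := Fin n) (Ideal.Quotient.mk I)).ker

lemma mem_congSubgroup {I : Ideal R} {g : GL (Fin n) R} :
    g ∈ congSubgroup n I ↔ ∀ i j, ((g : Matrix (Fin n) (Fin n) R) - 1) i j ∈ I := by
  rw [congSubgroup, mem_ker_glmap]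
  simp [Ideal.mk_ker]

lemma congSubgroup_bot : congSubgroup n (⊥ : Ideal R) = ⊥ := by
  rw [eq_bot_iff]
  intro g hg
  rw [mem_congSubgroup] at hg
  rw [Subgroup.mem_bot]
  apply Units.ext
  have : (g : Matrix (Fin n) (Fin n) R) - 1 = 0 := by
    ext i j
    exact (Submodule.mem_bot R).mp (hg i j)
  have := sub_eq_zero.mp this
  simpa using this

lemma entries_mul_mem {I J : Ideal R} {M N : Matrix (Fin n) (Fin n) R}
    (hM : ∀ i j, M i j ∈ I) (hN : ∀ i j, N i j ∈ J) : ∀ i j, (M * N) i j ∈ I * J := by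
  intro i j
  rw [Matrix.mul_apply]
  exact Submodule.sum_mem _ fun k _ => Ideal.mul_mem_mul (hM i k) (hN k j)

lemma entries_mul_right {I : Ideal R} {M : Matrix (Fin n) (Fin n) R}
    (hM : ∀ i j, M i j ∈ I) (P : Matrix (Fin n) (Fin n) R) :
    ∀ i j, (M * P) i j ∈ I := by
  intro i j
  rw [Matrix.mul_apply]
  exact Submodule.sum_mem _ fun k _ => I.mul_mem_right _ (hM i k)

lemma commutator_mem_congSubgroup {I : Ideal R} {g h : GL (Fin n) R}
    (hg : g ∈ congSubgroup n I) (hh : h ∈ congSubgroup n I) :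
    ⁅g, h⁆ ∈ congSubgroup n (I * I) := by
  rw [mem_congSubgroup] at hg hh ⊢
  set A : Matrix (Fin n) (Fin n) R := ↑g
  set B : Matrix (Fin n) (Fin n) R := ↑h
  set G' : Matrix (Fin n) (Fin n) R := ↑g⁻¹
  set H' : Matrix (Fin n) (Fin n) R := ↑h⁻¹
  have hAG : A * G' = 1 := by
    rw [show A * G' = ((g * g⁻¹ : GL (Fin n) R) : Matrix (Fin n) (Fin n) R) from rfl, mul_inv_cancel]
    rfl
  have hBH : B * H' = 1 := by
    rw [show B * H' = ((h * h⁻¹ : GL (Fin n) R) : Matrix (Fin n) (Fin n) R) from rfl, mul_inv_cancel]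
    rfl
  have key : ((⁅g, h⁆ : GL (Fin n) R) : Matrix (Fin n) (Fin n) R) - 1
      = ((A - 1) * (B - 1) - (B - 1) * (A - 1)) * G' * H' := by
    have hcomm : ((⁅g, h⁆ : GL (Fin n) R) : Matrix (Fin n) (Fin n) R) = A * B * G' * H' := rfl
    have hexp : (A - 1) * (B - 1) - (B - 1) * (A - 1) = A * B - B * A := by noncomm_ring
    have hBA : B * A * G' * H' = 1 := by
      rw [mul_assoc B A G', hAG, mul_one, hBH]
    rw [hcomm, hexp, sub_mul, sub_mul, hBA]
  intro i j
  rw [key]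
  refine entries_mul_right (entries_mul_right ?_ G') H' i j
  intro i' j'
  exact Submodule.sub_mem _ (entries_mul_mem hg hh i' j') (entries_mul_mem hh hg i' j')

lemma isSolvable_congSubgroup {I : Ideal R} (hI : IsNilpotent I) :
    IsSolvable ↥(congSubgroup n I) := by
  obtain ⟨k, hk⟩ := hI
  have hmono : ∀ {I' J : Ideal R}, I' ≤ J → congSubgroup n I' ≤ congSubgroup n J := by
    intro I' J hIJ g hg
    rw [mem_congSubgroup] at hg ⊢
    exact fun i j => hIJ (hg i j)
  have hchain : ∀ m, (derivedSeries ↥(congSubgroup n I) m).map (congSubgroup n I).subtype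
      ≤ congSubgroup n (I ^ (2 ^ m)) := by
    intro m
    induction m with
    | zero =>
      rw [derivedSeries_zero]
      simp only [pow_zero, pow_one]
      intro x hx
      obtain ⟨y, _, rfl⟩ := hx
      exact y.2
    | succ m ih =>
      rw [derivedSeries_succ, Subgroup.map_commutator]
      rw [Subgroup.commutator_le]
      intro g1 hg1 g2 hg2
      have h1 := commutator_mem_congSubgroup (ih hg1) (ih hg2)
      have : I ^ 2 ^ m * I ^ 2 ^ m = I ^ 2 ^ (m + 1) := by
        rw [← pow_add, pow_succ, Nat.mul_comm, Nat.two_mul]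
      rwa [this] at h1
  refine ⟨⟨k, ?_⟩⟩
  have hbot : I ^ 2 ^ k = ⊥ := by
    rw [eq_bot_iff]
    calc I ^ 2 ^ k ≤ I ^ k := Ideal.pow_le_pow_right (Nat.le_of_lt (Nat.lt_two_pow_self))
    _ = ⊥ := hk
  have := hchain k
  rw [hbot, congSubgroup_bot, le_bot_iff, Subgroup.map_eq_bot_iff,
    Subgroup.ker_subtype, le_bot_iff] at this
  exact this

end Congruence

section Factor
open Matrix
variable {R : Type*} [CommRing R] {n : ℕ}

lemma glmap_injective {S : Type*} [CommRing S] {f : R →+* S} (hf : Function.Injective f) :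
    Function.Injective (Matrix.GeneralLinearGroup.map (n := Fin n) f) := by
  intro g h hgh
  apply Units.ext
  have := congrArg Units.val hgh
  ext i j
  apply hf
  have h1 : (Matrix.GeneralLinearGroup.map (n := Fin n) f g : Matrix (Fin n) (Fin n) S) i j
      = (Matrix.GeneralLinearGroup.map (n := Fin n) f h : Matrix (Fin n) (Fin n) S) i j := by
    rw [this]
  simpa using h1

lemma mem_range_glmap_of_entries {A : Subalgebra ℤ R} (g : GL (Fin n) R)
    (hg : ∀ i j, (g : Matrix (Fin n) (Fin n) R) i j ∈ A)
    (hg' : ∀ i j, ((g⁻¹ : GL (Fin n) R) : Matrix (Fin n) (Fin n) R) i j ∈ A) :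
    g ∈ (Matrix.GeneralLinearGroup.map (n := Fin n) (A.val.toRingHom)).range := by
  set ι : ↥A →+* R := A.val.toRingHom
  have hινj : Function.Injective ι := Subtype.val_injective
  set M : Matrix (Fin n) (Fin n) ↥A := Matrix.of fun i j => (⟨(g : Matrix (Fin n) (Fin n) R) i j, hg i j⟩ : A)
  set N : Matrix (Fin n) (Fin n) ↥A := Matrix.of fun i j => (⟨((g⁻¹ : GL (Fin n) R) : Matrix (Fin n) (Fin n) R) i j, hg' i j⟩ : A)
  have hmapM : M.map ι = (g : Matrix (Fin n) (Fin n) R) := by ext i j; rfl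
  have hmapN : N.map ι = ((g⁻¹ : GL (Fin n) R) : Matrix (Fin n) (Fin n) R) := by ext i j; rfl
  have hmapinj : Function.Injective fun P : Matrix (Fin n) (Fin n) ↥A => P.map ι := by
    intro P Q hPQ
    ext i j
    exact congrFun (congrFun hPQ i) j
  have hMN : M * N = 1 := by
    apply hmapinj
    show (M * N).map ι = (1 : Matrix (Fin n) (Fin n) ↥A).map ι
    rw [Matrix.map_mul, Matrix.map_one ι (map_zero ι) (map_one ι), hmapM, hmapN]
    exact_mod_cast g.mul_inv
  have hNM : N * M = 1 := by
    apply hmapinj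
    show (N * M).map ι = (1 : Matrix (Fin n) (Fin n) ↥A).map ι
    rw [Matrix.map_mul, Matrix.map_one ι (map_zero ι), hmapM, hmapN]
    · exact_mod_cast g.inv_mul
    · exact map_one ι
  refine ⟨⟨M, N, hMN, hNM⟩, ?_⟩
  apply Units.ext
  ext i j
  rfl

lemma exists_factor_subalgebra {Γ : Type*} [Group Γ] [Group.FG Γ]
    (f : Γ →* GL (Fin n) R) :
    ∃ (A : Subalgebra ℤ R) (f' : Γ →* GL (Fin n) ↥A), A.FG ∧
      (Matrix.GeneralLinearGroup.map (n := Fin n) (A.val.toRingHom)).comp f' = f := by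
  obtain ⟨S, hScl, hSfin⟩ := Group.fg_iff.mp ‹Group.FG Γ›
  classical
  set T : Set R := ⋃ γ ∈ S,
      (Set.range fun p : Fin n × Fin n => (f γ : Matrix (Fin n) (Fin n) R) p.1 p.2) ∪
      (Set.range fun p : Fin n × Fin n => (((f γ)⁻¹ : GL (Fin n) R) : Matrix (Fin n) (Fin n) R) p.1 p.2)
  have hTfin : T.Finite :=
    Set.Finite.biUnion hSfin fun γ _ => (Set.finite_range _).union (Set.finite_range _)
  set A : Subalgebra ℤ R := Algebra.adjoin ℤ T
  have hAfg : A.FG := by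
    obtain ⟨s, hs⟩ := hTfin.exists_finset_coe
    rw [show A = Algebra.adjoin ℤ (↑s : Set R) by rw [hs]]
    exact Subalgebra.fg_adjoin_finset s
  set j : GL (Fin n) ↥A →* GL (Fin n) R :=
    Matrix.GeneralLinearGroup.map (n := Fin n) (A.val.toRingHom)
  have hmem : ∀ γ : Γ, f γ ∈ j.range := by
    have hle : Subgroup.closure S ≤ j.range.comap f := by
      rw [Subgroup.closure_le]
      intro s hs
      have hentry : ∀ i j', (f s : Matrix (Fin n) (Fin n) R) i j' ∈ A := by
        intro i j'
        apply Algebra.subset_adjoin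
        exact Set.mem_biUnion hs (Or.inl ⟨(i, j'), rfl⟩)
      have hentry' : ∀ i j', (((f s)⁻¹ : GL (Fin n) R) : Matrix (Fin n) (Fin n) R) i j' ∈ A := by
        intro i j'
        apply Algebra.subset_adjoin
        exact Set.mem_biUnion hs (Or.inr ⟨(i, j'), rfl⟩)
      exact mem_range_glmap_of_entries (f s) hentry hentry'
    intro γ
    have : γ ∈ Subgroup.closure S := by rw [hScl]; trivial
    exact hle this
  have hjinj : Function.Injective j := glmap_injective Subtype.val_injective
  refine ⟨A, ((MonoidHom.ofInjective hjinj).symm.toMonoidHom).comp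
    (f.codRestrict j.range hmem), hAfg, MonoidHom.ext fun γ => ?_⟩
  show j ((MonoidHom.ofInjective hjinj).symm (⟨f γ, hmem γ⟩ : j.range)) = f γ
  rw [MonoidHom.apply_ofInjective_symm hjinj]

end Factor

section Main2to3
open Matrix

lemma vs_range_of_components {Γ : Type*} [Group Γ] {R₀ : Type*} [CommRing R₀] {n : ℕ}
    (hnil : IsNilpotent (nilradical R₀))
    {ι : Type*} [Finite ι] {H : ι → Type*} [∀ i, Group (H i)]
    (Φ : ∀ i, GL (Fin n) R₀ →* H i)
    (hker : ∀ x : GL (Fin n) R₀, (∀ i, Φ i x = 1) → x ∈ congSubgroup n (nilradical R₀))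
    (f' : Γ →* GL (Fin n) R₀)
    (hvs : ∀ i, IsVirtuallySolvable ↥((Φ i).comp f').range) :
    IsVirtuallySolvable ↥f'.range := by
  let Φ' : GL (Fin n) R₀ →* ∀ i : ι, H i :=
    { toFun := fun x => fun i => Φ i x,
      map_one' := by funext i; exact map_one (Φ i),
      map_mul' := fun a b => by funext i; exact map_mul (Φ i) a b }
  haveI hcongsolv : Group.IsSolvable ↥(congSubgroup n (nilradical R₀)) := isSolvable_congSubgroup hnil
  set g : ↥f'.range →* ∀ i : ι, H i := Φ'.comp f'.range.subtype with hg
  apply vs_of_pi g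
  · refine solvable_of_solvable_injective
      (f := { toFun := fun x : g.ker => (⟨x.1.1, hker x.1.1 fun i => congrFun x.2 i⟩ :
                congSubgroup n (nilradical R₀)),
              map_one' := rfl, map_mul' := fun _ _ => rfl }) ?_
    intro a b hab
    rw [Subtype.ext_iff] at hab
    exact Subtype.ext (Subtype.ext hab)
  · intro i
    have hrange : ((Pi.evalMonoidHom H i).comp g).range = ((Φ i).comp f').range := by
      have he : (Pi.evalMonoidHom H i).comp g = (Φ i).comp f'.range.subtype := rfl
      rw [he, MonoidHom.range_comp, MonoidHom.range_comp, Subgroup.range_subtype]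
    rw [hrange]
    exact hvs i

lemma exists_field_glmap {R₀ : Type u} [CommRing R₀] (p : Ideal R₀) [p.IsPrime] (n : ℕ) :
    ∃ (K : Type u) (_ : Field K) (Φp : GL (Fin n) R₀ →* GL (Fin n) K),
      ∀ x : GL (Fin n) R₀, Φp x = 1 →
        ∀ i j, ((x : Matrix (Fin n) (Fin n) R₀) - 1) i j ∈ p := by
  refine ⟨FractionRing (R₀ ⧸ p), inferInstance,
    Matrix.GeneralLinearGroup.map (n := Fin n)
      ((algebraMap (R₀ ⧸ p) (FractionRing (R₀ ⧸ p))).comp (Ideal.Quotient.mk p)), ?_⟩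
  intro x hx i j
  set π : R₀ →+* FractionRing (R₀ ⧸ p) :=
    (algebraMap (R₀ ⧸ p) (FractionRing (R₀ ⧸ p))).comp (Ideal.Quotient.mk p)
  have hmem := (mem_ker_glmap π x).mp hx i j
  rw [RingHom.mem_ker] at hmem
  have h1 : (Ideal.Quotient.mk p) (((x : Matrix (Fin n) (Fin n) R₀) - 1) i j) = 0 := by
    apply IsFractionRing.injective (R₀ ⧸ p) (FractionRing (R₀ ⧸ p))
    rw [map_zero]
    exact hmem
  exact Ideal.Quotient.eq_zero_iff_mem.mp h1

set_option maxHeartbeats 1000000 in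
lemma field_of_ring {Γ : Type*} [Group Γ] [Group.FG Γ] {R : Type u} [CommRing R] {n : ℕ}
    (f : Γ →* GL (Fin n) R) (hf : ¬ IsVirtuallySolvable ↥f.range) :
    ∃ (K : Type u) (_ : Field K) (g : Γ →* GL (Fin n) K), ¬ IsVirtuallySolvable ↥g.range := by
  classical
  obtain ⟨A, f', hAfg, hcomp⟩ := exists_factor_subalgebra f
  have hjinj : Function.Injective (Matrix.GeneralLinearGroup.map (n := Fin n) (A.val.toRingHom)) :=
    glmap_injective Subtype.val_injective
  have hf' : ¬ IsVirtuallySolvable ↥f'.range := by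
    intro hvs
    apply hf
    rw [← hcomp]
    rwa [vs_range_comp_injective f' _ hjinj]
  haveI : Algebra.FiniteType ℤ ↥A := (Subalgebra.fg_iff_finiteType A).mp hAfg
  haveI : IsNoetherianRing ↥A := Algebra.FiniteType.isNoetherianRing ℤ ↥A
  set R₀ := ↥A
  set P : Set (Ideal R₀) := minimalPrimes R₀ with hP
  haveI : Finite ↥P := (minimalPrimes.finite_of_isNoetherianRing R₀).to_subtype
  haveI hprime : ∀ p : ↥P, (p : Ideal R₀).IsPrime := fun p => p.2.1.1
  have hembed : ∀ p : ↥P, ∃ (K : Type u) (_ : Field K)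
      (Φp : GL (Fin n) R₀ →* GL (Fin n) K),
      ∀ x : GL (Fin n) R₀, Φp x = 1 →
        ∀ i j, ((x : Matrix (Fin n) (Fin n) R₀) - 1) i j ∈ (p : Ideal R₀) := fun p =>
    exists_field_glmap (p : Ideal R₀) n
  choose K hKfield Φ hkerΦ using hembed
  have hker : ∀ x : GL (Fin n) R₀, (∀ p : ↥P, Φ p x = 1) →
      x ∈ congSubgroup n (nilradical R₀) := by
    intro x hx
    rw [mem_congSubgroup]
    intro i j
    rw [nilradical_eq_sInf, Submodule.mem_sInf]
    intro J hJ
    haveI : Ideal.IsPrime J := hJ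
    obtain ⟨q, hq, hqJ⟩ := Ideal.exists_minimalPrimes_le (bot_le : ⊥ ≤ J)
    exact hqJ (hkerΦ ⟨q, hq⟩ x (hx ⟨q, hq⟩) i j)
  by_contra hcon
  push_neg at hcon
  have hvscomp : ∀ p : ↥P, IsVirtuallySolvable ↥((Φ p).comp f').range := by
    intro p
    by_contra h
    exact h (hcon (K p) (hKfield p) ((Φ p).comp f'))
  exact hf' (vs_range_of_components (IsNoetherianRing.isNilpotent_nilradical R₀) Φ hker f' hvscomp)

end Main2to3

section ModulePart
open Matrix

variable {R : Type*} [CommRing R] {M : Type*} [AddCommGroup M] [Module R M]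

/-- The stabilization homomorphism from `Aut(M)` to `Aut(V)` given a split surjection
`π : V → M` with section `s`. -/
noncomputable def autStab {V : Type*} [AddCommGroup V] [Module R V]
    (π : V →ₗ[R] M) (s : M →ₗ[R] V) (hs : ∀ m, π (s m) = m) :
    (M ≃ₗ[R] M) →* (V ≃ₗ[R] V) := by
  refine MonoidHom.mk' (fun e => LinearEquiv.ofLinear
    (s ∘ₗ (e : M →ₗ[R] M) ∘ₗ π + (LinearMap.id - s ∘ₗ π))
    (s ∘ₗ (e.symm : M →ₗ[R] M) ∘ₗ π + (LinearMap.id - s ∘ₗ π)) ?_ ?_) ?_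
  case _ =>
    ext x
    simp [hs, LinearMap.sub_apply, LinearMap.add_apply, map_add, map_sub]
  case _ =>
    ext x
    simp [hs, LinearMap.sub_apply, LinearMap.add_apply, map_add, map_sub]
  case _ =>
    intro a b
    apply LinearEquiv.toLinearMap_injective
    ext x
    simp [hs, LinearMap.sub_apply, LinearMap.add_apply, map_add, map_sub]


lemma autStab_apply {V : Type*} [AddCommGroup V] [Module R V]
    (π : V →ₗ[R] M) (s : M →ₗ[R] V) (hs : ∀ m, π (s m) = m) (e : M ≃ₗ[R] M) (x : V) :
    autStab π s hs e x = s (e (π x)) + (x - s (π x)) := rfl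

lemma autStab_injective {V : Type*} [AddCommGroup V] [Module R V]
    (π : V →ₗ[R] M) (s : M →ₗ[R] V) (hs : ∀ m, π (s m) = m) :
    Function.Injective (autStab π s hs) := by
  intro a b hab
  apply LinearEquiv.toLinearMap_injective
  ext m
  have h1 : ∀ c : M ≃ₗ[R] M, π (autStab π s hs c (s m)) = c m := by
    intro c
    rw [autStab_apply, map_add, map_sub, hs, hs, hs]
    simp
  have h2 := h1 a
  rw [hab, h1 b] at h2
  exact h2.symm

end ModulePart


open Matrix

/-- For a finitely generated group `Γ`, the following are equivalent:
(1) there exist a commutative unital ring `R`, a finitely generated projective `R`-module `M`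
and a homomorphism `Γ → Aut_R(M)` whose image is not virtually solvable;
(2) there exist a commutative unital ring `R`, an integer `n ≥ 1` and a homomorphism
`Γ → GL_n(R)` whose image is not virtually solvable;
(3) there exist a field `K`, an integer `n ≥ 1` and a homomorphism `Γ → GL_n(K)` whose
image is not virtually solvable. -/
theorem ringLinear_iff_fieldLinear_notVirtuallySolvable
    (Γ : Type) [Group Γ] [Group.FG Γ] :
    ((∃ (R : Type) (_ : CommRing R) (M : Type) (_ : AddCommGroup M) (_ : Module R M),
        Module.Finite R M ∧ Module.Projective R M ∧
        ∃ f : Γ →* (M ≃ₗ[R] M), ¬ IsVirtuallySolvable ↥f.range) ↔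
      (∃ (R : Type) (_ : CommRing R) (n : ℕ), 1 ≤ n ∧
        ∃ f : Γ →* Matrix.GeneralLinearGroup (Fin n) R, ¬ IsVirtuallySolvable ↥f.range))
    ∧
    ((∃ (R : Type) (_ : CommRing R) (n : ℕ), 1 ≤ n ∧
        ∃ f : Γ →* Matrix.GeneralLinearGroup (Fin n) R, ¬ IsVirtuallySolvable ↥f.range) ↔
      (∃ (K : Type) (_ : Field K) (n : ℕ), 1 ≤ n ∧
        ∃ f : Γ →* Matrix.GeneralLinearGroup (Fin n) K, ¬ IsVirtuallySolvable ↥f.range)) := by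
  constructor
  · constructor
    · -- (1) → (2)
      rintro ⟨R, instR, M, instM, instMod, hfin, hproj, f, hf⟩
      haveI := hfin; haveI := hproj
      obtain ⟨n, π0, hπ0⟩ := Module.Finite.exists_fin' R M
      set V : Type := Fin (n + 1) → R with hV
      set π : V →ₗ[R] M := π0 ∘ₗ LinearMap.funLeft R R Fin.castSucc with hπdef
      have hπ : Function.Surjective π :=
        hπ0.comp (LinearMap.funLeft_surjective_of_injective R R _ (Fin.castSucc_injective n))
      obtain ⟨s, hsec⟩ := Module.projective_lifting_property π LinearMap.id hπ
      have hs : ∀ m, π (s m) = m := fun m => LinearMap.congr_fun hsec m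
      refine ⟨R, instR, n + 1, Nat.le_add_left 1 n, ?_⟩
      let e : GL (Fin (n + 1)) R ≃* (V ≃ₗ[R] V) :=
        (Matrix.GeneralLinearGroup.toLin).trans
          (LinearMap.GeneralLinearGroup.generalLinearEquiv R V)
      refine ⟨(e.symm.toMonoidHom.comp (autStab π s hs)).comp f, ?_⟩
      intro hvs
      apply hf
      have hinj : Function.Injective (e.symm.toMonoidHom.comp (autStab π s hs)) :=
        e.symm.injective.comp (autStab_injective π s hs)
      exact (vs_range_comp_injective f _ hinj).mp hvs
    · -- (2) → (1)
      rintro ⟨R, instR, n, hn, f, hf⟩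
      refine ⟨R, instR, Fin n → R, inferInstance, inferInstance, inferInstance, inferInstance, ?_⟩
      let e : GL (Fin n) R ≃* ((Fin n → R) ≃ₗ[R] (Fin n → R)) :=
        (Matrix.GeneralLinearGroup.toLin).trans
          (LinearMap.GeneralLinearGroup.generalLinearEquiv R (Fin n → R))
      refine ⟨e.toMonoidHom.comp f, ?_⟩
      intro hvs
      exact hf ((vs_range_comp_injective f e.toMonoidHom e.injective).mp hvs)
  · constructor
    · -- (2) → (3)
      rintro ⟨R, instR, n, hn, f, hf⟩
      obtain ⟨K, instK, g, hg⟩ := field_of_ring f hf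
      exact ⟨K, instK, n, hn, g, hg⟩
    · -- (3) → (2)
      rintro ⟨K, instK, n, hn, f, hf⟩
      exact ⟨K, inferInstance, n, hn, f, hf⟩
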